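/- Let (X, μ) be a measure space with 0 < μ(X) < ∞, let u : X → ℝ be measurable, and let v : X → ℝ be measurable with c ≤ v(x) ≤ C for all x ∈ X, where 0 < c ≤ C. Then there exists a unique λ ∈ ℝ such that med̲(u + λ·v) = 0, where med̲(w) = inf{t ∈ ℝ : μ{x : w(x) > t} ≤ μ(X)/2}. -/

import Mathlib

open MeasureTheory Filter Topology
open scoped ENNReal

namespace LowerMedianAux

variable {X : Type*} [MeasurableSpace X] (μ : Measure X)

/-- The defining set of the lower median. -/
def S (w : X → ℝ) : Set ℝ := {t : ℝ | μ {x | w x > t} ≤ μ Set.univ / 2}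

lemma S_nonempty (hpos : 0 < μ Set.univ) (hfin : μ Set.univ < ⊤)
    {w : X → ℝ} (hw : Measurable w) : (S μ w).Nonempty := by
  set s : ℕ → Set X := fun n => {x | w x > (n : ℝ)} with hs
  have hmeas : ∀ n, NullMeasurableSet (s n) μ := fun n =>
    (measurableSet_lt measurable_const hw).nullMeasurableSet
  have hanti : Antitone s := by
    intro m n hmn x hx
    simp only [s, gt_iff_lt, Set.mem_setOf_eq] at hx ⊢
    exact lt_of_le_of_lt (by exact_mod_cast hmn) hx
  have hempty : (⋂ n, s n) = ∅ := by
    ext x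
    simp only [Set.mem_iInter, Set.mem_empty_iff_false, iff_false, not_forall]
    obtain ⟨n, hn⟩ := exists_nat_gt (w x)
    exact ⟨n, by simpa [s] using hn.le⟩
  have hfin' : ∃ n, μ (s n) ≠ ∞ := ⟨0, ((measure_mono (Set.subset_univ _)).trans_lt hfin).ne⟩
  have htend : Tendsto (μ ∘ s) atTop (𝓝 0) := by
    have := tendsto_measure_iInter_atTop (μ := μ) hmeas hanti hfin'
    rwa [hempty, measure_empty] at this
  have hhalf : (0 : ℝ≥0∞) < μ Set.univ / 2 :=
    ENNReal.div_pos hpos.ne' (by norm_num)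
  have := htend.eventually_lt_const hhalf
  obtain ⟨n, hn⟩ := this.exists
  exact ⟨(n : ℝ), hn.le⟩

lemma S_bddBelow (hpos : 0 < μ Set.univ) (hfin : μ Set.univ < ⊤)
    (w : X → ℝ) : BddBelow (S μ w) := by
  set s : ℕ → Set X := fun n => {x | w x > -(n : ℝ)} with hs
  have hmono : Monotone s := by
    intro m n hmn x hx
    simp only [s, gt_iff_lt, Set.mem_setOf_eq] at hx ⊢
    refine lt_of_le_of_lt ?_ hx
    exact neg_le_neg (by exact_mod_cast hmn)
  have huniv : (⋃ n, s n) = Set.univ := by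
    ext x
    simp only [Set.mem_iUnion, Set.mem_univ, iff_true]
    obtain ⟨n, hn⟩ := exists_nat_gt (-(w x))
    exact ⟨n, by simpa [s] using neg_lt.mp hn⟩
  have htend : Tendsto (μ ∘ s) atTop (𝓝 (μ Set.univ)) := by
    have := tendsto_measure_iUnion_atTop (μ := μ) hmono
    rwa [huniv] at this
  have hhalf : μ Set.univ / 2 < μ Set.univ := ENNReal.half_lt_self hpos.ne' hfin.ne
  obtain ⟨n, hn⟩ := (htend.eventually_const_lt hhalf).exists
  refine ⟨-(n : ℝ), fun t ht => ?_⟩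
  by_contra hlt
  push_neg at hlt
  have hsub : s n ⊆ {x | w x > t} := fun x hx => lt_trans hlt hx
  exact absurd ((measure_mono hsub).trans ht) (not_le.mpr hn)

lemma sInf_S_mono (hpos : 0 < μ Set.univ) (hfin : μ Set.univ < ⊤)
    {w w' : X → ℝ} (hw' : Measurable w') (h : ∀ x, w x ≤ w' x) :
    sInf (S μ w) ≤ sInf (S μ w') := by
  refine csInf_le_csInf (S_bddBelow μ hpos hfin w) (S_nonempty μ hpos hfin hw') ?_
  intro t ht
  refine le_trans (measure_mono ?_) ht
  exact fun x hx => lt_of_lt_of_le hx (h x)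

lemma sInf_S_add_const (hpos : 0 < μ Set.univ) (hfin : μ Set.univ < ⊤)
    {w : X → ℝ} (hw : Measurable w) (a : ℝ) :
    sInf (S μ (fun x => w x + a)) = sInf (S μ w) + a := by
  have himg : S μ (fun x => w x + a) = (fun t => t + a) '' (S μ w) := by
    ext t
    simp only [S, Set.mem_setOf_eq, Set.mem_image]
    constructor
    · intro ht
      refine ⟨t - a, ?_, by ring⟩
      have hset : {x | w x > t - a} = {x | w x + a > t} := by
        ext x; simp only [gt_iff_lt, Set.mem_setOf_eq]; constructor <;> intro <;> linarith
      rw [hset]; exact ht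
    · rintro ⟨r, hr, rfl⟩
      have : {x | w x + a > r + a} = {x | w x > r} := by
        ext x; simp [gt_iff_lt]
      rw [this]; exact hr
  rw [himg]
  have := (OrderIso.addRight a).map_csInf' (S_nonempty μ hpos hfin hw)
    (S_bddBelow μ hpos hfin w)
  exact this.symm

end LowerMedianAux

/-- If `v` is measurable with `0 < c ≤ v(x) ≤ C` for all `x`, then for any
measurable `u` there exists a unique real `λ` such that the lower median of
`u + λ v` vanishes, where the lower median is
`med̲(w) = inf {t | μ{w > t} ≤ μ(X)/2}`. -/
theorem exists_unique_shift_zero_lower_median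
    {X : Type*} [MeasurableSpace X] (μ : Measure X)
    (hpos : 0 < μ Set.univ) (hfin : μ Set.univ < ⊤)
    (u : X → ℝ) (hu : Measurable u)
    (v : X → ℝ) (hv : Measurable v)
    (c C : ℝ) (hc : 0 < c) (hcC : c ≤ C)
    (hbd : ∀ x, c ≤ v x ∧ v x ≤ C) :
    ∃! l : ℝ,
      sInf {t : ℝ | μ {x | u x + l * v x > t} ≤ μ Set.univ / 2} = 0 := by
  classical
  open LowerMedianAux in
  have hC : 0 < C := hc.trans_le hcC
  set f : ℝ → ℝ := fun l => sInf (S μ (fun x => u x + l * v x)) with hf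
  have hmeas : ∀ l : ℝ, Measurable (fun x => u x + l * v x) :=
    fun l => hu.add (measurable_const.mul hv)
  -- key two-sided bound
  have key : ∀ a b : ℝ, a ≤ b →
      f a + (b - a) * c ≤ f b ∧ f b ≤ f a + (b - a) * C := by
    intro a b hab
    have hba : 0 ≤ b - a := sub_nonneg.mpr hab
    constructor
    · calc f a + (b - a) * c
          = sInf (S μ (fun x => (u x + a * v x) + (b - a) * c)) :=
            (sInf_S_add_const μ hpos hfin (hmeas a) _).symm
        _ ≤ f b := by
            refine sInf_S_mono μ hpos hfin (hmeas b) ?_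
            intro x
            have : (b - a) * c ≤ (b - a) * v x :=
              mul_le_mul_of_nonneg_left (hbd x).1 hba
            nlinarith [this]
    · calc f b
          ≤ sInf (S μ (fun x => (u x + a * v x) + (b - a) * C)) := by
            refine sInf_S_mono μ hpos hfin ((hmeas a).add measurable_const) ?_
            intro x
            have : (b - a) * v x ≤ (b - a) * C :=
              mul_le_mul_of_nonneg_left (hbd x).2 hba
            nlinarith [this]
        _ = f a + (b - a) * C := sInf_S_add_const μ hpos hfin (hmeas a) _
  -- f is Lipschitz, hence continuous
  have hlip : LipschitzWith (Real.toNNReal C) f := by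
    refine LipschitzWith.of_dist_le_mul fun a b => ?_
    have habs : ∀ a b : ℝ, a ≤ b → |f b - f a| ≤ C * |b - a| := by
      intro a b hab
      obtain ⟨h1, h2⟩ := key a b hab
      have h0 : 0 ≤ f b - f a := by nlinarith [sub_nonneg.mpr hab]
      rw [abs_of_nonneg h0, abs_of_nonneg (sub_nonneg.mpr hab)]
      nlinarith
    rcases le_total a b with hab | hab
    · rw [Real.dist_eq, Real.dist_eq, abs_sub_comm (f a), abs_sub_comm a,
        Real.coe_toNNReal C hC.le]
      exact habs a b hab
    · rw [Real.dist_eq, Real.dist_eq, Real.coe_toNNReal C hC.le]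
      exact habs b a hab
  have hcont : Continuous f := hlip.continuous
  -- choose endpoints
  set M : ℝ := |f 0| with hM
  set l₁ : ℝ := -((M + 1) / c) with hl₁
  set l₂ : ℝ := (M + 1) / c with hl₂
  have hM0 : 0 ≤ M := abs_nonneg _
  have hl12 : l₁ ≤ l₂ := by
    have : 0 ≤ (M + 1) / c := div_nonneg (by linarith) hc.le
    simp only [hl₁, hl₂]; linarith
  have hmul : (M + 1) / c * c = M + 1 := div_mul_cancel₀ _ hc.ne'
  have hfl₂ : 0 ≤ f l₂ := by
    obtain ⟨h1, _⟩ := key 0 l₂ (by positivity)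
    have : f 0 + (M + 1) ≤ f l₂ := by
      simpa [hl₂, hmul] using h1
    have := neg_abs_le (f 0)
    simp only [← hM] at *
    linarith
  have hfl₁ : f l₁ ≤ 0 := by
    obtain ⟨h1, _⟩ := key l₁ 0 (by simpa [hl₁] using div_nonneg (by linarith : (0:ℝ) ≤ M + 1) hc.le)
    have h0l₁ : (0 : ℝ) - l₁ = (M + 1) / c := by simp [hl₁, hl₂]
    rw [h0l₁, hmul] at h1
    have := le_abs_self (f 0)
    simp only [← hM] at *
    linarith
  -- existence via IVT
  have hivt := intermediate_value_Icc hl12 hcont.continuousOn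
  obtain ⟨l, _, hl⟩ := hivt ⟨hfl₁, hfl₂⟩
  refine ⟨l, hl, ?_⟩
  -- uniqueness via strict monotonicity
  intro l' hl'
  have hl'f : f l' = 0 := hl'
  by_contra hne
  rcases lt_or_gt_of_ne hne with h | h
  · obtain ⟨h1, _⟩ := key l' l h.le
    have : 0 < (l - l') * c := mul_pos (sub_pos.mpr h) hc
    rw [hl'f, hl] at h1; linarith
  · obtain ⟨h1, _⟩ := key l l' h.le
    have : 0 < (l' - l) * c := mul_pos (sub_pos.mpr h) hc
    rw [hl'f, hl] at h1; linarith
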